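/- For any positive integer n that is not a power of 2, with k = ⌊log₂ n⌋, the number of hyperbinary expansions of n of length k+1 equals b(n − 2^k), the total number of hyperbinary expansions of n − 2^k. -/

import Mathlib

/-- The integer represented by a word of digits (most significant first). -/
def hval (w : List ℕ) : ℕ := w.foldl (fun a d => 2 * a + d) 0

/-- `w` is a hyperbinary expansion of `n`: digits in {0,1,2}, nonzero leading
digit, representing `n`.  (The empty word is the unique expansion of `0`.) -/
def IsHyp (n : ℕ) (w : List ℕ) : Prop :=
  (∀ d ∈ w, d ≤ 2) ∧ w.head? ≠ some 0 ∧ hval w = n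

/-- `b n`: the number of hyperbinary expansions of `n` (so `b 0 = 1`). -/
noncomputable def hb (n : ℕ) : ℕ := Set.ncard {w : List ℕ | IsHyp n w}

/-- A single rewriting step: `02 → 10` or `12 → 20`, a leading `2` treated as `02`. -/
def Step (u v : List ℕ) : Prop :=
  (∃ x y : List ℕ, u = x ++ [0, 2] ++ y ∧ v = x ++ [1, 0] ++ y) ∨
  (∃ x y : List ℕ, u = x ++ [1, 2] ++ y ∧ v = x ++ [2, 0] ++ y) ∨
  (∃ y : List ℕ, u = 2 :: y ∧ v = 1 :: 0 :: y)

/-- Strict shortlex order: first by length, then lexicographically. -/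
def Shortlex (u v : List ℕ) : Prop :=
  u.length < v.length ∨ (u.length = v.length ∧ List.Lex (· < ·) u v)

/-- Number of maximal blocks of consecutive `2`'s in a word. -/
def blocks2 : List ℕ → ℕ
  | [] => 0
  | d :: rest => blocks2 rest + (if d = 2 ∧ rest.head? ≠ some 2 then 1 else 0)

lemma hval_foldl (b : List ℕ) : ∀ c : ℕ,
    List.foldl (fun a d => 2 * a + d) c b = c * 2 ^ b.length + hval b := by
  induction b with
  | nil => intro c; simp [hval]
  | cons d t ih =>
    intro c
    have h1 : hval (d :: t) = d * 2 ^ t.length + hval t := by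
      show List.foldl (fun a d => 2 * a + d) (2 * 0 + d) t = _
      rw [ih]; ring_nf
    simp only [List.foldl_cons, List.length_cons, h1, ih (2 * c + d)]
    ring

lemma hval_cons (d : ℕ) (t : List ℕ) :
    hval (d :: t) = d * 2 ^ t.length + hval t := by
  show List.foldl (fun a d => 2 * a + d) (2 * 0 + d) t = _
  rw [hval_foldl]; ring_nf

lemma hval_rep_append (j : ℕ) (u : List ℕ) :
    hval (List.replicate j 0 ++ u) = hval u := by
  induction j with
  | zero => simp
  | succ j ih => rw [List.replicate_succ, List.cons_append, hval_cons, ih]; simp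

lemma dropWhile_rep_append (j : ℕ) (u : List ℕ) (hu : u.head? ≠ some 0) :
    (List.replicate j 0 ++ u).dropWhile (· == 0) = u := by
  induction j with
  | zero =>
    simp only [List.replicate_zero, List.nil_append]
    cases u with
    | nil => simp
    | cons d t =>
      rw [List.dropWhile_cons_of_neg]
      simp at hu; simp [hu]
  | succ j ih =>
    rw [List.replicate_succ, List.cons_append, List.dropWhile_cons_of_pos (by simp)]
    exact ih

theorem stmt9 (n : ℕ) (hn : 0 < n) (hnp : ¬∃ k : ℕ, n = 2 ^ k) :
    Set.ncard {w : List ℕ | IsHyp n w ∧ w.length = Nat.log 2 n + 1} =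
      hb (n - 2 ^ Nat.log 2 n) := by
  set k := Nat.log 2 n with hk
  set m := n - 2 ^ k with hmdef
  have h2k : 2 ^ k ≤ n := Nat.pow_log_le_self 2 hn.ne'
  have hlt : n < 2 ^ (k + 1) := Nat.lt_pow_succ_log_self (by norm_num) n
  have hne : n ≠ 2 ^ k := fun h => hnp ⟨k, h⟩
  have hm0 : 0 < m := by omega
  have hmn : 2 ^ k + m = n := by omega
  have hmk : m < 2 ^ k := by
    have : 2 ^ (k + 1) = 2 ^ k + 2 ^ k := by ring
    omega
  set G : List ℕ → List ℕ := fun u => 1 :: (List.replicate (k - u.length) 0 ++ u)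
    with hG
  -- every u in the target set has length ≤ k
  have hlen_le : ∀ u : List ℕ, IsHyp m u → u.length ≤ k := by
    rintro u ⟨hd, hh, hv⟩
    cases u with
    | nil => simp [hval] at hv; omega
    | cons d t =>
      have h1 : 1 ≤ d := by
        simp only [List.head?_cons, ne_eq, Option.some.injEq] at hh; omega
      have := hval_cons d t
      have hb : 2 ^ t.length ≤ m := by nlinarith [hv, this]
      have : t.length < k := by
        by_contra h
        push_neg at h
        exact absurd (le_trans (Nat.pow_le_pow_right (by norm_num) h) hb) (by omega)
      simpa using this
  -- the set of long expansions is the image of G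
  have himg : {w : List ℕ | IsHyp n w ∧ w.length = k + 1}
      = G '' {u : List ℕ | IsHyp m u} := by
    ext w
    constructor
    · rintro ⟨⟨hdig, hhead, hvw⟩, hlen⟩
      cases w with
      | nil => simp at hlen
      | cons d t =>
        have htk : t.length = k := by simpa using hlen
        have hd1 : d = 1 := by
          have hd2 : d ≤ 2 := hdig d (by simp)
          have hd0 : 1 ≤ d := by
            simp only [List.head?_cons, ne_eq, Option.some.injEq] at hhead; omega
          rw [hval_cons, htk] at hvw
          have : 2 ^ (k + 1) = 2 ^ k + 2 ^ k := by ring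
          nlinarith
        subst hd1
        rw [hval_cons, htk] at hvw
        have hvt : hval t = m := by omega
        set u := t.dropWhile (· == 0) with hu
        have hsplit : t.takeWhile (· == 0) ++ u = t := List.takeWhile_append_dropWhile
        have htw : t.takeWhile (· == 0) = List.replicate (t.takeWhile (· == 0)).length 0 := by
          apply List.eq_replicate_of_mem
          intro b hb
          have := List.mem_takeWhile_imp hb
          simpa using this
        have hhu : u.head? ≠ some 0 := by
          intro h
          cases hu' : u with
          | nil => rw [hu'] at h; simp at h
          | cons a s =>
            rw [hu'] at h
            simp only [List.head?_cons, Option.some.injEq] at h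
            have : ¬ ((a : ℕ) == 0) = true := by
              have := List.head?_dropWhile_not (· == 0) t
              rw [← hu, hu'] at this
              simpa using this
            simp [h] at this
        have hulen : (t.takeWhile (· == 0)).length + u.length = k := by
          have := congrArg List.length hsplit
          simpa [htk] using this
        refine ⟨u, ⟨?_, hhu, ?_⟩, ?_⟩
        · intro d hd
          exact hdig d (by
            have : d ∈ t := List.dropWhile_subset _ (by rw [← hu]; exact hd)
            simp [this])
        · have : hval t = hval u := by
            conv_lhs => rw [← hsplit, htw]
            exact hval_rep_append _ _
          omega
        · show 1 :: (List.replicate (k - u.length) 0 ++ u) = 1 :: t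
          congr 1
          rw [show k - u.length = (t.takeWhile (· == 0)).length by omega, ← htw, hsplit]
    · rintro ⟨u, ⟨hdig, hh, hv⟩, rfl⟩
      have hul : u.length ≤ k := hlen_le u ⟨hdig, hh, hv⟩
      constructor
      · refine ⟨?_, by simp [hG], ?_⟩
        · intro d hd
          simp only [hG, List.mem_cons, List.mem_append, List.mem_replicate] at hd
          rcases hd with rfl | hd | hd
          · norm_num
          · omega
          · exact hdig d hd
        · show hval (1 :: (List.replicate (k - u.length) 0 ++ u)) = n
          rw [hval_cons, hval_rep_append]
          have : (List.replicate (k - u.length) 0 ++ u).length = k := by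
            simp; omega
          rw [this, hv]; omega
      · show (1 :: (List.replicate (k - u.length) 0 ++ u)).length = k + 1
        simp; omega
  have hinj : Set.InjOn G {u : List ℕ | IsHyp m u} := by
    intro u hu u' hu' h
    simp only [hG, List.cons.injEq, true_and] at h
    have h1 := dropWhile_rep_append (k - u.length) u hu.2.1
    have h2 := dropWhile_rep_append (k - u'.length) u' hu'.2.1
    rw [← h1, ← h2, h]
  rw [himg, Set.ncard_image_of_injOn hinj, hb]
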